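/- Let A be a canonical quasi-Babelian 3×3 advantage matrix with parameters a, b > 0 (a₂₁ = a₃₁ = b and all other off-diagonal entries equal to a), let ρ = b/a, and suppose 0 < ρ < 2. Then the interior fixed point p* = (1/(5−2ρ), (2−ρ)/(5−2ρ), (2−ρ)/(5−2ρ)) of the associated Variational Learning dynamics F is asymptotically stable: there exists a relative neighbourhood U of p* in S₃ such that for every q ∈ U the iterates Fⁿ(q) converge to p* as n → ∞. -/

import Mathlib

open Finset Filter Topology

/-- The simplex `S₃` of probability vectors over three grammars. -/
def simplex3 : Set (Fin 3 → ℝ) :=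
  {p | (∀ i, 0 ≤ p i) ∧ ∑ i, p i = 1}

/-- The penalty probability `c_i(p) = ∑_{j ≠ i} a_{ij} p_j`. -/
def penalty (A : Matrix (Fin 3) (Fin 3) ℝ) (p : Fin 3 → ℝ) (i : Fin 3) : ℝ :=
  ∑ j ∈ Finset.univ.filter (fun j => j ≠ i), A i j * p j

/-- The Variational Learning dynamics
`F_i(p) = ∏_{j ≠ i} c_j(p) / ∑_m ∏_{k ≠ m} c_k(p)`. -/
noncomputable def VLdyn (A : Matrix (Fin 3) (Fin 3) ℝ) (p : Fin 3 → ℝ) (i : Fin 3) : ℝ :=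
  (∏ j ∈ Finset.univ.filter (fun j => j ≠ i), penalty A p j) /
    (∑ m, ∏ k ∈ Finset.univ.filter (fun k => k ≠ m), penalty A p k)

/-- The vertex `v_i` of the simplex, i.e. the state of total dominance of grammar `G_i`. -/
def vertex (i : Fin 3) : Fin 3 → ℝ := fun j => if j = i then 1 else 0

/-! ### Auxiliary definitions and lemmas -/

/-- The denominator of the Variational Learning dynamics for the canonical quasi-Babelian
advantage matrix. -/
def Sden (a b : ℝ) (p : Fin 3 → ℝ) : ℝ :=
  (b*p 0 + a*p 2)*(b*p 0 + a*p 1) + (a*p 1 + a*p 2)*(b*p 0 + a*p 1)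
    + (a*p 1 + a*p 2)*(b*p 0 + a*p 2)

/-- Explicit form of the Variational Learning dynamics for the canonical quasi-Babelian
advantage matrix. -/
noncomputable def Gmap (a b : ℝ) (p : Fin 3 → ℝ) : Fin 3 → ℝ :=
  ![((b*p 0 + a*p 2)*(b*p 0 + a*p 1)) * (Sden a b p)⁻¹,
    ((a*p 1 + a*p 2)*(b*p 0 + a*p 1)) * (Sden a b p)⁻¹,
    ((a*p 1 + a*p 2)*(b*p 0 + a*p 2)) * (Sden a b p)⁻¹]

/-- The interior fixed point. -/
noncomputable def Pstar (a b : ℝ) : Fin 3 → ℝ :=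
  ![1/(5-2*(b/a)), (2-(b/a))/(5-2*(b/a)), (2-(b/a))/(5-2*(b/a))]

lemma five_sub (a b : ℝ) (ha : 0 < a) : (5:ℝ)-2*(b/a) = (5*a-2*b)/a := by
  field_simp

lemma VLdyn_eq_Gmap (a b : ℝ) : VLdyn !![0, a, a; b, 0, a; b, a, 0] = Gmap a b := by
  funext p i
  fin_cases i <;>
    simp [VLdyn, penalty, Gmap, Sden, Finset.prod_filter, Finset.sum_filter,
      Fin.sum_univ_three, Fin.prod_univ_three, Matrix.vecHead, Matrix.vecTail,
      div_eq_mul_inv]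

lemma Sden_Pstar (a b : ℝ) (ha : 0 < a) (h5 : 0 < 5*a - 2*b) :
    Sden a b (Pstar a b) = 4*a^3/(5*a-2*b) := by
  have h5' : (5:ℝ)-2*(b/a) ≠ 0 := by
    rw [five_sub a b ha]; positivity
  have h5'' : 5*a-b*2 ≠ 0 := by linarith
  simp only [Sden, Pstar, Matrix.cons_val_zero, Matrix.cons_val_one, Matrix.head_cons,
    Matrix.cons_val_two, Matrix.tail_cons]
  rw [five_sub a b ha]
  field_simp
  ring

lemma Gmap_fixed (a b : ℝ) (ha : 0 < a) (h2 : b < 2*a) :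
    Gmap a b (Pstar a b) = Pstar a b := by
  have h5 : 0 < 5*a-2*b := by linarith
  have h5' : (5:ℝ)-2*(b/a) ≠ 0 := by rw [five_sub a b ha]; positivity
  funext i
  fin_cases i <;>
  · simp only [Gmap, Fin.zero_eta, Fin.mk_one, Fin.reduceFinMk, Matrix.cons_val_zero, Matrix.cons_val_one,
      Matrix.head_cons, Matrix.cons_val_two, Matrix.tail_cons]
    rw [Sden_Pstar a b ha h5]
    have h5'' : 5*a-b*2 ≠ 0 := by linarith
    simp only [Pstar, Matrix.cons_val_zero, Matrix.cons_val_one,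
      Matrix.head_cons, Matrix.cons_val_two, Matrix.tail_cons]
    rw [five_sub a b ha]
    field_simp
    ring

lemma Gmap_sum (a b : ℝ) (p : Fin 3 → ℝ) (hS : Sden a b p ≠ 0) :
    ∑ i, Gmap a b p i = 1 := by
  simp only [Gmap, Fin.sum_univ_three, Matrix.cons_val_zero, Matrix.cons_val_one,
    Matrix.head_cons, Matrix.cons_val_two, Matrix.tail_cons]
  field_simp
  simp [Sden]
  ring

lemma Pstar_sum (a b : ℝ) (ha : 0 < a) (h2 : b < 2*a) : ∑ i, Pstar a b i = 1 := by
  have h5 : 0 < 5*a-2*b := by linarith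
  have h5' : (5:ℝ)-2*(b/a) ≠ 0 := by rw [five_sub a b ha]; positivity
  simp only [Pstar, Fin.sum_univ_three, Matrix.cons_val_zero, Matrix.cons_val_one,
    Matrix.head_cons, Matrix.cons_val_two, Matrix.tail_cons]
  field_simp
  ring

lemma Sden_pos_near (a b : ℝ) (ha : 0 < a) (h2 : b < 2*a) :
    ∃ r > 0, ∀ p : Fin 3 → ℝ, dist p (Pstar a b) < r → Sden a b p ≠ 0 := by
  have h5 : 0 < 5*a-2*b := by linarith
  have hcont : Continuous (Sden a b) := by
    unfold Sden
    fun_prop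
  have hpos : 0 < Sden a b (Pstar a b) := by
    rw [Sden_Pstar a b ha h5]; positivity
  have hev : (Sden a b) ⁻¹' (Set.Ioi 0) ∈ 𝓝 (Pstar a b) :=
    hcont.continuousAt.preimage_mem_nhds (Ioi_mem_nhds hpos)
  obtain ⟨r, hr, hball⟩ := Metric.mem_nhds_iff.mp hev
  exact ⟨r, hr, fun p hp => ne_of_gt (hball hp)⟩

set_option maxHeartbeats 2000000 in
lemma Gmap_lip (a b : ℝ) (ha : 0 < a) (hb : 0 < b) (h2 : b < 2*a) :
    ∃ r > 0, ∀ x y : Fin 3 → ℝ, dist x (Pstar a b) < r → dist y (Pstar a b) < r →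
      (∑ i, x i) = 1 → (∑ i, y i) = 1 →
      dist (Gmap a b x) (Gmap a b y) ≤ ((3 + |b/a - 1|)/4) * dist x y := by
  have h5 : 0 < 5*a-2*b := by linarith
  have h5' : (5:ℝ)-2*(b/a) ≠ 0 := by rw [five_sub a b ha]; positivity
  have hp0 : HasStrictFDerivAt (𝕜 := ℝ) (fun p : Fin 3 → ℝ => p 0)
      (ContinuousLinearMap.proj 0) (Pstar a b) := hasStrictFDerivAt_apply 0 (Pstar a b)
  have hp1 : HasStrictFDerivAt (𝕜 := ℝ) (fun p : Fin 3 → ℝ => p 1)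
      (ContinuousLinearMap.proj 1) (Pstar a b) := hasStrictFDerivAt_apply 1 (Pstar a b)
  have hp2 : HasStrictFDerivAt (𝕜 := ℝ) (fun p : Fin 3 → ℝ => p 2)
      (ContinuousLinearMap.proj 2) (Pstar a b) := hasStrictFDerivAt_apply 2 (Pstar a b)
  have hc1 := (hp1.const_mul a).add (hp2.const_mul a)
  have hc2 := (hp0.const_mul b).add (hp2.const_mul a)
  have hc3 := (hp0.const_mul b).add (hp1.const_mul a)
  have hN0 := hc2.mul hc3
  have hN1 := hc1.mul hc3
  have hN2 := hc1.mul hc2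
  have hS : HasStrictFDerivAt (fun p => Sden a b p) _ (Pstar a b) := (hN0.add hN1).add hN2
  have hSne : Sden a b (Pstar a b) ≠ 0 := by
    rw [Sden_Pstar a b ha h5]; positivity
  have hinv := (hasStrictDerivAt_inv hSne).comp_hasStrictFDerivAt (Pstar a b) hS
  -- explicit linear maps with their action on tangent vectors
  have main0 : ∃ L : (Fin 3 → ℝ) →L[ℝ] ℝ,
      HasStrictFDerivAt
        (fun p : Fin 3 → ℝ => ((b*p 0 + a*p 2)*(b*p 0 + a*p 1)) * (Sden a b p)⁻¹) L
        (Pstar a b) ∧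
      ∀ v : Fin 3 → ℝ, v 0 = -v 1 - v 2 → L v = b/(2*a) * v 0 := by
    refine ⟨_, hN0.mul hinv, ?_⟩
    intro v hv
    simp only [ContinuousLinearMap.add_apply, ContinuousLinearMap.smul_apply,
      ContinuousLinearMap.proj_apply, smul_eq_mul, Pi.add_apply, Pi.mul_apply]
    rw [Sden_Pstar a b ha h5]
    have h5'' : 5*a-b*2 ≠ 0 := by linarith
    simp only [Pstar, Matrix.cons_val_zero, Matrix.cons_val_one, Matrix.head_cons,
      Matrix.cons_val_two, Matrix.tail_cons]
    rw [hv]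
    rw [five_sub a b ha]
    field_simp
    ring
  have main1 : ∃ L : (Fin 3 → ℝ) →L[ℝ] ℝ,
      HasStrictFDerivAt
        (fun p : Fin 3 → ℝ => ((a*p 1 + a*p 2)*(b*p 0 + a*p 1)) * (Sden a b p)⁻¹) L
        (Pstar a b) ∧
      ∀ v : Fin 3 → ℝ, v 0 = -v 1 - v 2 → L v = (v 1 + (b/a - 1) * v 2)/2 := by
    refine ⟨_, hN1.mul hinv, ?_⟩
    intro v hv
    simp only [ContinuousLinearMap.add_apply, ContinuousLinearMap.smul_apply,
      ContinuousLinearMap.proj_apply, smul_eq_mul, Pi.add_apply, Pi.mul_apply]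
    rw [Sden_Pstar a b ha h5]
    have h5'' : 5*a-b*2 ≠ 0 := by linarith
    have h5''' : a*5-2*b ≠ 0 := by linarith
    simp only [Pstar, Matrix.cons_val_zero, Matrix.cons_val_one, Matrix.head_cons,
      Matrix.cons_val_two, Matrix.tail_cons]
    rw [hv]
    rw [five_sub a b ha]
    field_simp
    ring
  have main2 : ∃ L : (Fin 3 → ℝ) →L[ℝ] ℝ,
      HasStrictFDerivAt
        (fun p : Fin 3 → ℝ => ((a*p 1 + a*p 2)*(b*p 0 + a*p 2)) * (Sden a b p)⁻¹) L
        (Pstar a b) ∧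
      ∀ v : Fin 3 → ℝ, v 0 = -v 1 - v 2 → L v = (v 2 + (b/a - 1) * v 1)/2 := by
    refine ⟨_, hN2.mul hinv, ?_⟩
    intro v hv
    simp only [ContinuousLinearMap.add_apply, ContinuousLinearMap.smul_apply,
      ContinuousLinearMap.proj_apply, smul_eq_mul, Pi.add_apply, Pi.mul_apply]
    rw [Sden_Pstar a b ha h5]
    have h5'' : 5*a-b*2 ≠ 0 := by linarith
    have h5''' : a*5-2*b ≠ 0 := by linarith
    simp only [Pstar, Matrix.cons_val_zero, Matrix.cons_val_one, Matrix.head_cons,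
      Matrix.cons_val_two, Matrix.tail_cons]
    rw [hv]
    rw [five_sub a b ha]
    field_simp
    ring
  obtain ⟨L0, hG0, hL0⟩ := main0
  obtain ⟨L1, hG1, hL1⟩ := main1
  obtain ⟨L2, hG2, hL2⟩ := main2
  -- the contraction constant pieces
  set ρ := b/a with hρdef
  have hρpos : 0 < ρ := div_pos hb ha
  have hρlt : ρ < 2 := (div_lt_iff₀ ha).mpr (by linarith)
  set K : ℝ := (1 + |ρ - 1|)/2 with hKdef
  have hKnn : 0 ≤ K := by positivity
  have hKlt : K < 1 := by
    have : |ρ - 1| < 1 := abs_lt.mpr ⟨by linarith, by linarith⟩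
    rw [hKdef]; linarith
  set ε : ℝ := (1 - K)/2 with hεdef
  have hεpos : 0 < ε := by rw [hεdef]; linarith
  -- little-o estimates
  have e0 := hG0.isLittleO.def hεpos
  have e1 := hG1.isLittleO.def hεpos
  have e2 := hG2.isLittleO.def hεpos
  obtain ⟨r, hr, H⟩ := Metric.eventually_nhds_iff.mp ((e0.and e1).and e2)
  refine ⟨r, hr, ?_⟩
  intro x y hx hy hsx hsy
  have hz : dist ((x, y)) ((Pstar a b, Pstar a b)) < r := by
    rw [Prod.dist_eq]; exact max_lt hx hy
  obtain ⟨⟨E0, E1⟩, E2⟩ := H hz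
  -- tangent condition
  have hsum3x : x 0 + x 1 + x 2 = 1 := by
    rw [Fin.sum_univ_three] at hsx; linarith
  have hsum3y : y 0 + y 1 + y 2 = 1 := by
    rw [Fin.sum_univ_three] at hsy; linarith
  have hv : (x - y) 0 = -(x - y) 1 - (x - y) 2 := by
    simp only [Pi.sub_apply]; linarith
  have hnv : ∀ i : Fin 3, |(x - y) i| ≤ ‖x - y‖ := by
    intro i
    simpa [Real.norm_eq_abs] using norm_le_pi_norm (x - y) i
  have hLb0 : |L0 (x - y)| ≤ K * ‖x - y‖ := by
    rw [hL0 _ hv]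
    have h1 : b/(2*a) ≤ K := by
      rw [hKdef]
      have := le_abs_self (ρ - 1)
      have hρeq : b/(2*a) = ρ/2 := by rw [hρdef]; ring
      rw [hρeq]; linarith
    have h2 : (0:ℝ) ≤ b/(2*a) := by positivity
    calc |b/(2*a) * (x - y) 0| = b/(2*a) * |(x - y) 0| := by
          rw [abs_mul, abs_of_nonneg h2]
      _ ≤ K * ‖x - y‖ :=
          mul_le_mul h1 (hnv 0) (abs_nonneg _) hKnn
  have hLb1 : |L1 (x - y)| ≤ K * ‖x - y‖ := by
    rw [hL1 _ hv]
    have e1 := hnv 1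
    have e2 := hnv 2
    have h := abs_add_le ((x - y) 1) ((ρ - 1) * ((x - y) 2))
    have hm : |(ρ - 1) * ((x - y) 2)| = |ρ - 1| * |(x - y) 2| := abs_mul _ _
    have hmm : |ρ - 1| * |(x - y) 2| ≤ |ρ - 1| * ‖x - y‖ :=
      mul_le_mul_of_nonneg_left e2 (abs_nonneg _)
    have habs0 : |((x - y) 1 + (ρ - 1) * ((x - y) 2))/2|
        = |(x - y) 1 + (ρ - 1) * ((x - y) 2)|/2 := by
      rw [abs_div]; norm_num
    rw [habs0, hKdef]
    linarith
  have hLb2 : |L2 (x - y)| ≤ K * ‖x - y‖ := by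
    rw [hL2 _ hv]
    have e1 := hnv 1
    have e2 := hnv 2
    have h := abs_add_le ((x - y) 2) ((ρ - 1) * ((x - y) 1))
    have hm : |(ρ - 1) * ((x - y) 1)| = |ρ - 1| * |(x - y) 1| := abs_mul _ _
    have hmm : |ρ - 1| * |(x - y) 1| ≤ |ρ - 1| * ‖x - y‖ :=
      mul_le_mul_of_nonneg_left e1 (abs_nonneg _)
    have habs0 : |((x - y) 2 + (ρ - 1) * ((x - y) 1))/2|
        = |(x - y) 2 + (ρ - 1) * ((x - y) 1)|/2 := by
      rw [abs_div]; norm_num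
    rw [habs0, hKdef]
    linarith
  -- assemble
  have hkey : (3 + |ρ - 1|)/4 = K + ε := by rw [hεdef, hKdef]; ring
  have hdxy : dist x y = ‖x - y‖ := dist_eq_norm x y
  rw [hkey]
  rw [dist_pi_le_iff (by positivity)]
  intro i
  have hKε : ∀ (u Lv : ℝ), |u - Lv| ≤ ε * ‖x - y‖ → |Lv| ≤ K * ‖x - y‖ →
      dist u 0 ≤ (K + ε) * dist x y → True := fun _ _ _ _ _ => trivial
  fin_cases i
  · show dist (Gmap a b x 0) (Gmap a b y 0) ≤ (K + ε) * dist x y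
    rw [Real.dist_eq, hdxy]
    have hE : |Gmap a b x 0 - Gmap a b y 0 - L0 (x - y)| ≤ ε * ‖x - y‖ := by
      simpa [Gmap, Real.norm_eq_abs] using E0
    calc |Gmap a b x 0 - Gmap a b y 0|
        ≤ |Gmap a b x 0 - Gmap a b y 0 - L0 (x - y)| + |L0 (x - y)| := by
          have := abs_sub_abs_le_abs_sub (Gmap a b x 0 - Gmap a b y 0) (L0 (x - y))
          have h := abs_add_le (Gmap a b x 0 - Gmap a b y 0 - L0 (x - y)) (L0 (x - y))
          simpa using h
      _ ≤ ε * ‖x - y‖ + K * ‖x - y‖ := add_le_add hE hLb0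
      _ = (K + ε) * ‖x - y‖ := by ring
  · show dist (Gmap a b x 1) (Gmap a b y 1) ≤ (K + ε) * dist x y
    rw [Real.dist_eq, hdxy]
    have hE : |Gmap a b x 1 - Gmap a b y 1 - L1 (x - y)| ≤ ε * ‖x - y‖ := by
      simpa [Gmap, Real.norm_eq_abs] using E1
    calc |Gmap a b x 1 - Gmap a b y 1|
        ≤ |Gmap a b x 1 - Gmap a b y 1 - L1 (x - y)| + |L1 (x - y)| := by
          have h := abs_add_le (Gmap a b x 1 - Gmap a b y 1 - L1 (x - y)) (L1 (x - y))
          simpa using h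
      _ ≤ ε * ‖x - y‖ + K * ‖x - y‖ := add_le_add hE hLb1
      _ = (K + ε) * ‖x - y‖ := by ring
  · show dist (Gmap a b x 2) (Gmap a b y 2) ≤ (K + ε) * dist x y
    rw [Real.dist_eq, hdxy]
    have hE : |Gmap a b x 2 - Gmap a b y 2 - L2 (x - y)| ≤ ε * ‖x - y‖ := by
      simpa [Gmap, Real.norm_eq_abs] using E2
    calc |Gmap a b x 2 - Gmap a b y 2|
        ≤ |Gmap a b x 2 - Gmap a b y 2 - L2 (x - y)| + |L2 (x - y)| := by
          have h := abs_add_le (Gmap a b x 2 - Gmap a b y 2 - L2 (x - y)) (L2 (x - y))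
          simpa using h
      _ ≤ ε * ‖x - y‖ + K * ‖x - y‖ := add_le_add hE hLb2
      _ = (K + ε) * ‖x - y‖ := by ring

theorem stmt_19 (a b : ℝ) (ha : 0 < a) (hb : 0 < b)
    (A : Matrix (Fin 3) (Fin 3) ℝ)
    (hA : A = !![0, a, a; b, 0, a; b, a, 0]) (ρ : ℝ) (hρ : ρ = b / a)
    (hρ2 : ρ < 2) :
    ∃ U ∈ 𝓝[simplex3] (![1/(5-2*ρ), (2-ρ)/(5-2*ρ), (2-ρ)/(5-2*ρ)] : Fin 3 → ℝ),
      ∀ q ∈ U, Tendsto (fun n => (VLdyn A)^[n] q) atTop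
        (𝓝 ![1/(5-2*ρ), (2-ρ)/(5-2*ρ), (2-ρ)/(5-2*ρ)]) := by
  subst hρ
  subst hA
  have h2 : b < 2*a := by
    rw [div_lt_iff₀ ha] at hρ2; linarith
  have hPeq : (![1/(5-2*(b/a)), (2-(b/a))/(5-2*(b/a)), (2-(b/a))/(5-2*(b/a))] : Fin 3 → ℝ)
      = Pstar a b := rfl
  rw [hPeq, VLdyn_eq_Gmap]
  obtain ⟨r1, hr1, Hlip⟩ := Gmap_lip a b ha hb h2
  obtain ⟨r2, hr2, HS⟩ := Sden_pos_near a b ha h2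
  set r := min r1 r2 with hrdef
  have hr : 0 < r := lt_min hr1 hr2
  refine ⟨simplex3 ∩ Metric.ball (Pstar a b) r,
    inter_mem_nhdsWithin simplex3 (Metric.ball_mem_nhds _ hr), ?_⟩
  rintro q ⟨hqS, hqB⟩
  set k : ℝ := (3 + |b/a - 1|)/4 with hkdef
  have hk0 : 0 ≤ k := by positivity
  have hk1 : k < 1 := by
    have h1 : |b/a - 1| < 1 := by
      rw [abs_lt]
      constructor
      · have : 0 < b/a := div_pos hb ha
        linarith
      · have : b/a < 2 := hρ2
        linarith
    rw [hkdef]; linarith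
  have hfix : Gmap a b (Pstar a b) = Pstar a b := Gmap_fixed a b ha h2
  have hPsum : ∑ i, Pstar a b i = 1 := Pstar_sum a b ha h2
  have hPball : dist (Pstar a b) (Pstar a b) < r := by
    rw [dist_self]; exact hr
  -- main invariant
  have claim : ∀ n : ℕ, dist ((Gmap a b)^[n] q) (Pstar a b) ≤ k^n * dist q (Pstar a b) ∧
      dist ((Gmap a b)^[n] q) (Pstar a b) < r ∧ ∑ i, (Gmap a b)^[n] q i = 1 := by
    intro n
    induction n with
    | zero =>
      refine ⟨by simp, by simpa using hqB, ?_⟩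
      simpa using hqS.2
    | succ n ih =>
      obtain ⟨hle, hball, hsum⟩ := ih
      set z := (Gmap a b)^[n] q with hzdef
      have hz1 : dist z (Pstar a b) < r1 := lt_of_lt_of_le hball (min_le_left _ _)
      have hz2 : dist z (Pstar a b) < r2 := lt_of_lt_of_le hball (min_le_right _ _)
      have hP1 : dist (Pstar a b) (Pstar a b) < r1 := by rw [dist_self]; exact hr1
      have hstep : dist (Gmap a b z) (Pstar a b) ≤ k * dist z (Pstar a b) := by
        have := Hlip z (Pstar a b) hz1 hP1 hsum hPsum
        rwa [hfix] at this
      rw [Function.iterate_succ_apply', ← hzdef]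
      refine ⟨?_, ?_, ?_⟩
      · calc dist (Gmap a b z) (Pstar a b) ≤ k * dist z (Pstar a b) := hstep
          _ ≤ k * (k^n * dist q (Pstar a b)) := by
              exact mul_le_mul_of_nonneg_left hle hk0
          _ = k^(n+1) * dist q (Pstar a b) := by ring
      · calc dist (Gmap a b z) (Pstar a b) ≤ k * dist z (Pstar a b) := hstep
          _ ≤ 1 * dist z (Pstar a b) :=
              mul_le_mul_of_nonneg_right (le_of_lt hk1) dist_nonneg
          _ = dist z (Pstar a b) := one_mul _
          _ < r := hball
      · exact Gmap_sum a b z (HS z hz2)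
  -- convergence
  rw [tendsto_iff_dist_tendsto_zero]
  have hlim : Tendsto (fun n : ℕ => k^n * dist q (Pstar a b)) atTop (𝓝 0) := by
    have hpow := tendsto_pow_atTop_nhds_zero_of_lt_one hk0 hk1
    simpa using hpow.mul_const (dist q (Pstar a b))
  exact squeeze_zero (fun n => dist_nonneg) (fun n => (claim n).1) hlim
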